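/- Let H = {0,1}² ⊆ ℕ² and K = {0,…,5}² \ {2,3}². Then K ⪯ H³, where H³ = σ_H³({(0,0)}) = {0,…,7}² is the 8×8 grid. -/

import Mathlib

attribute [local instance] Classical.propDecidable

namespace SelfAssembly

/-! ### Positions and directions -/

/-- Positions of the discrete plane. -/
abbrev Pos : Type := ℤ × ℤ

/-- The four cardinal directions. -/
inductive Dir : Type
  | N | E | S | W
deriving DecidableEq

/-- The unit vector associated with a direction. -/
def Dir.vec : Dir → Pos
  | .N => (0, 1)
  | .E => (1, 0)
  | .S => (0, -1)
  | .W => (-1, 0)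

/-- The opposite direction. -/
def Dir.opp : Dir → Dir
  | .N => .S
  | .E => .W
  | .S => .N
  | .W => .E

/-- The list of all directions (canonical order). -/
def Dir.all : List Dir := [.N, .E, .S, .W]

/-- Two positions adjacent in the grid graph of ℤ². -/
def gridAdj (z z' : Pos) : Prop := ∃ d : Dir, z' = z + d.vec

lemma gridAdj_symm {z z' : Pos} (h : gridAdj z z') : gridAdj z' z := by
  obtain ⟨d, rfl⟩ := h
  refine ⟨d.opp, ?_⟩
  cases d <;>
    simp [Dir.vec, Dir.opp, Prod.ext_iff, Prod.fst_add, Prod.snd_add]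

lemma gridAdj_irrefl (z : Pos) : ¬ gridAdj z z := by
  rintro ⟨d, h⟩
  cases d <;>
    simp [Dir.vec, Prod.ext_iff, Prod.fst_add, Prod.snd_add] at h

noncomputable section

/-! ### Shapes and substitutions on ℕ² -/

/-- Positions with natural coordinates. -/
abbrev NPos : Type := ℕ × ℕ

/-- The embedding of ℕ² into ℤ². -/
def embedN (p : NPos) : Pos := ((p.1 : ℤ), (p.2 : ℤ))

/-- The bounding-box width of a shape: `1 +` the maximal x-coordinate. -/
def wdt (G : Set NPos) : ℕ := sSup (Prod.fst '' G) + 1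

/-- The bounding-box height of a shape: `1 +` the maximal y-coordinate. -/
def hgt (G : Set NPos) : ℕ := sSup (Prod.snd '' G) + 1

/-- The substitution associated with a generator `G`:
`σ_G(X) = { p | ⌊p / G⌋ ∈ X ∧ p mod G ∈ G }`. -/
def subst (G : Set NPos) (X : Set NPos) : Set NPos :=
  {p | (p.1 / wdt G, p.2 / hgt G) ∈ X ∧ (p.1 % wdt G, p.2 % hgt G) ∈ G}

/-- The `k`-th iterate `G^k = σ_G^k({(0,0)})`. -/
def iterG (G : Set NPos) (k : ℕ) : Set NPos := (subst G)^[k] {(0, 0)}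

/-- The discrete self-similar fractal shape `G^∞ = ⋃ₖ G^k`. -/
def limitG (G : Set NPos) : Set NPos := ⋃ k, iterG G k

/-- A shape is connected if any two of its cells are linked by a path of
grid-adjacent cells of the shape. -/
def ShapeConnected (G : Set NPos) : Prop :=
  ∀ p ∈ G, ∀ q ∈ G,
    Relation.ReflTransGen (fun a b => a ∈ G ∧ b ∈ G ∧ gridAdj (embedN a) (embedN b)) p q

/-- The generator `K = {0,…,5}² \ {2,3}²` of the Sierpinski Cacarpet. -/
def Kgen : Set NPos :=
  {p | p.1 < 6 ∧ p.2 < 6 ∧ ¬((p.1 = 2 ∨ p.1 = 3) ∧ (p.2 = 2 ∨ p.2 = 3))}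

/-- The 2×2 square `H = {0,1}²`. -/
def Hsq : Set NPos := {p | p.1 < 2 ∧ p.2 < 2}

/-! ### Grids, grid neighborhood graphs, ports, bandwidth -/

/-- The grid `G^#`: all positions of ℤ² which are congruent, modulo the
bounding box of `G`, to a cell of `G`. -/
def gridOf (G : Set NPos) : Set Pos :=
  {z | ((z.1 % (wdt G : ℤ)).toNat, (z.2 % (hgt G : ℤ)).toNat) ∈ G}

/-- The vertex set of the grid neighborhood graph `G⁺`:
`G` together with the grid cells at distance 1 of `G`. -/
def gplusV (G : Set NPos) : Set Pos :=
  embedN '' G ∪ {z | z ∈ gridOf G ∧ ∃ d : Dir, z + d.vec ∈ embedN '' G}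

/-- The grid neighborhood graph `G⁺`: the subgraph of the grid graph of ℤ²
induced by `gplusV G`. -/
def gplus (G : Set NPos) : SimpleGraph Pos where
  Adj z z' := z ∈ gplusV G ∧ z' ∈ gplusV G ∧ gridAdj z z'
  symm := ⟨fun _ _ h => ⟨h.2.1, h.1, gridAdj_symm h.2.2⟩⟩
  loopless := ⟨fun z h => gridAdj_irrefl z h.2.2⟩

/-- The `d`-port of `G`: `G^{+d} = {p ∈ G^# : p − d ∈ G}`. -/
def port (G : Set NPos) (d : Dir) : Set Pos :=
  {z | z ∈ gridOf G ∧ z - d.vec ∈ embedN '' G}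

/-- There exist `n` pairwise vertex-disjoint paths in `Gr` from `Src` to `Tgt`. -/
def DisjointConnections (Gr : SimpleGraph Pos) (Src Tgt : Set Pos) (n : ℕ) : Prop :=
  ∃ (u v : Fin n → Pos) (w : ∀ i, Gr.Walk (u i) (v i)),
    (∀ i, u i ∈ Src) ∧ (∀ i, v i ∈ Tgt) ∧ (∀ i, (w i).IsPath) ∧
    ∀ i j, i ≠ j → ∀ z, z ∈ (w i).support → z ∉ (w j).support

/-- The `(d,d')`-bandwidth of `G`: the maximal number of pairwise
vertex-disjoint paths from the `d`-port to the `d'`-port in `G⁺`. -/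
def bandwidth (G : Set NPos) (d d' : Dir) : ℕ :=
  sSup {n | DisjointConnections (gplus G) (port G d) (port G d') n}

/-! ### Subconnectors -/

/-- A witness that `G⁺` (with its ports marked) contains a pointed subgraph
which is a pointed subdivision of `H⁺` (with its ports marked): an injective
map `φ` of the vertices of `H⁺` sending `d`-ports to `d`-ports, together with,
for each edge of `H⁺`, a path of `G⁺` between the images of its endpoints,
these paths being internally disjoint from each other and from the images of
the vertices of `H⁺`. -/
structure SubdivEmbed (H G : Set NPos) where
  φ : Pos → Pos
  inj : Set.InjOn φ (gplusV H)
  marks : ∀ d : Dir, ∀ v ∈ port H d, φ v ∈ port G d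
  walk : ∀ u v : Pos, (gplus H).Adj u v → (gplus G).Walk (φ u) (φ v)
  walk_path : ∀ u v h, (walk u v h).IsPath
  walk_avoid : ∀ u v h, ∀ z ∈ (walk u v h).support,
      ∀ w ∈ gplusV H, z = φ w → (w = u ∨ w = v)
  walk_disj : ∀ u v h u' v' h', ¬((u = u' ∧ v = v') ∨ (u = v' ∧ v = u')) →
      ∀ z, z ∈ (walk u v h).support → z ∈ (walk u' v' h').support →
        ((z = φ u ∨ z = φ v) ∧ (z = φ u' ∨ z = φ v'))

/-- `H` is a subconnector of `G`, written `H ⪯ G`. -/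
def Subconnector (H G : Set NPos) : Prop := Nonempty (SubdivEmbed H G)

/-- Integer division of a position by the bounding box of a shape. -/
def quotP (P : Set NPos) (z : Pos) : Pos := (z.1.fdiv (wdt P), z.2.fdiv (hgt P))

/-- Remainder of a position modulo the bounding box of a shape. -/
def modP (P : Set NPos) (z : Pos) : Pos := (z.1.fmod (wdt P), z.2.fmod (hgt P))

/-- `v` is a `D`-disconnector of `P⁺`: for every pair `(d,d') ∈ D`, removing
`v` from `P⁺` disconnects the `d`-port from the `d'`-port. -/
def Disconnector (P : Set NPos) (D : Set (Dir × Dir)) (v : Pos) : Prop :=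
  ∀ dd ∈ D, ¬ ∃ (a b : Pos) (w : (gplus P).Walk a b),
      a ∈ port P dd.1 ∧ b ∈ port P dd.2 ∧ v ∉ w.support

/-- `Cause(v, D)`: the pairs of directions `(δ, δ')` such that some path of
`P⁺` from a `d`-port to a `d'`-port with `(d,d') ∈ D` enters `v` from
direction `δ` and leaves it through direction `δ'`. -/
def Cause (P : Set NPos) (D : Set (Dir × Dir)) (v : Pos) : Set (Dir × Dir) :=
  {p | ∃ dd ∈ D, ∃ (a b : Pos) (w : (gplus P).Walk a b),
      a ∈ port P dd.1 ∧ b ∈ port P dd.2 ∧ w.IsPath ∧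
      ∃ i : ℕ, w.support[i]? = some (v - p.1.vec) ∧
        w.support[i + 1]? = some v ∧
        w.support[i + 2]? = some (v + p.2.vec)}

/-! ### The abstract Tile Assembly Model -/

/-- A Wang tile: a glue on each side. -/
abbrev Tile (Glue : Type) := Dir → Glue

/-- An assembly: a partial function from positions to tiles. -/
abbrev Assembly (Glue : Type) := Pos → Option (Tile Glue)

/-- The domain of an assembly. -/
def adom {Glue : Type} (A : Assembly Glue) : Set Pos := {z | A z ≠ none}

/-- A seeded tile assembly system. -/
structure TAS (Glue : Type) where
  tileset : Finset (Tile Glue)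
  strength : Glue → ℤ
  temp : ℕ
  seed : Assembly Glue
  seed_tiles : ∀ z t, seed z = some t → t ∈ tileset

/-- The binding of the edge out of `z` in direction `d` in the assembly `A`:
the strength of the common glue if the two facing glues match, `0` otherwise. -/
def binding {Glue : Type} (S : TAS Glue) (A : Assembly Glue) (z : Pos) (d : Dir) : ℤ :=
  match A z, A (z + d.vec) with
  | some t, some t' => if t d = t' d.opp then S.strength (t d) else 0
  | _, _ => 0

/-- An assembly is stable if every cut of its domain is crossed by edges of
total binding at least the temperature. -/
def Stable {Glue : Type} (S : TAS Glue) (A : Assembly Glue) : Prop :=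
  ∀ P : Set Pos, P ⊆ adom A → P.Nonempty → (adom A \ P).Nonempty →
    ∃ F : Finset (Pos × Dir),
      (∀ e ∈ F, e.1 ∈ P ∧ e.1 + e.2.vec ∈ adom A \ P) ∧
      (S.temp : ℤ) ≤ ∑ e ∈ F, binding S A e.1 e.2

/-- `Attach S A B`: `B` is obtained from `A` by attaching one tile of the
tileset at an empty position, the result being stable. -/
def Attach {Glue : Type} (S : TAS Glue) (A B : Assembly Glue) : Prop :=
  ∃ t ∈ S.tileset, ∃ z : Pos, A z = none ∧ B = Function.update A z (some t) ∧ Stable S B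

/-- A production of `S`: an assembly which is the limit of a (finite or
infinite) sequence of attachments starting from the seed. -/
def IsProduction {Glue : Type} (S : TAS Glue) (A : Assembly Glue) : Prop :=
  ∃ α : ℕ → Assembly Glue, α 0 = S.seed ∧
    (∀ n, α (n + 1) = α n ∨ Attach S (α n) (α (n + 1))) ∧
    ∀ z t, A z = some t ↔ ∃ n, (α n) z = some t

/-- A terminal production: a production to which no tile can be attached. -/
def Terminal {Glue : Type} (S : TAS Glue) (A : Assembly Glue) : Prop :=
  IsProduction S A ∧ ∀ B, ¬ Attach S A B

/-- `S` strictly self-assembles `X`: every terminal production has domain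
exactly `X`. -/
def StrictlyAssembles {Glue : Type} (S : TAS Glue) (X : Set Pos) : Prop :=
  ∀ A, Terminal S A → adom A = X

/-- `S` weakly self-assembles `X`: there is a subset `Y` of the tileset such
that in every terminal production, the positions carrying a tile of `Y` are
exactly those of `X`. -/
def WeaklyAssembles {Glue : Type} (S : TAS Glue) (X : Set Pos) : Prop :=
  ∃ Y : Finset (Tile Glue), Y ⊆ S.tileset ∧
    ∀ A, Terminal S A → ∀ z : Pos, (∃ t ∈ Y, A z = some t) ↔ z ∈ X

/-! ### Sets of assemblies for the Tree Pump Lemma -/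

/-- The fill-in of `D`: `D` together with the positions from which every
(self-avoiding) path avoiding `D` is finite. -/
def fillIn (D : Set Pos) : Set Pos :=
  D ∪ {p | ¬ ∃ f : ℕ → Pos, f 0 = p ∧ Function.Injective f ∧
        ∀ n, f n ∉ D ∧ gridAdj (f n) (f (n + 1))}

/-- The assembly `A` encircles an `m × m` square: the fill-in of its domain
contains a full `m × m` square of positions. -/
def Encircles {Glue : Type} (A : Assembly Glue) (m : ℕ) : Prop :=
  ∃ z : Pos, ∀ i j : ℕ, i < m → j < m → z + ((i : ℤ), (j : ℤ)) ∈ fillIn (adom A)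

/-- Inner product of a position with a real vector. -/
def dot (p : Pos) (dv : ℝ × ℝ) : ℝ := (p.1 : ℝ) * dv.1 + (p.2 : ℝ) * dv.2

/-- The assembly covers no position `p` with `p·d > k + |seed|`. -/
def BBounded {Glue : Type} (S : TAS Glue) (k : ℝ) (dv : ℝ × ℝ) (A : Assembly Glue) : Prop :=
  ∀ p ∈ adom A, dot p dv ≤ k + (adom S.seed).ncard

/-- The assembly contains a nonempty subassembly periodic with a period `p`
with `|p·d| > 0`. -/
def PPeriodic {Glue : Type} (dv : ℝ × ℝ) (A : Assembly Glue) : Prop :=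
  ∃ pv : Pos, dot pv dv ≠ 0 ∧
    ∃ E : Set Pos, E.Nonempty ∧ E ⊆ adom A ∧ ∀ z ∈ E, z + pv ∈ E ∧ A (z + pv) = A z

/-! ### Embedded circuits -/

/-- A wiring on a unit cell: an ordered list of input sides, a set of output
sides (the remaining sides being inert), and for each output side its
output-wire datum (the ordered input sides of the next cell, with the
distinguished opposite direction) and the index of the corresponding output of
the gate. -/
structure Wiring where
  inputs : List Dir
  inputs_nodup : inputs.Nodup
  outputs : Finset Dir
  disjoint : ∀ d ∈ inputs, d ∉ outputs
  outWire : Dir → List Dir × Dir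
  outWire_distinguished : ∀ d ∈ outputs,
    (outWire d).2 = d.opp ∧ d.opp ∈ (outWire d).1 ∧ (outWire d).1.Nodup
  outIdx : Dir → ℕ
  outIdx_lt : ∀ d ∈ outputs, outIdx d < outputs.card
  outIdx_inj : ∀ d ∈ outputs, ∀ d' ∈ outputs, outIdx d = outIdx d' → d = d'

/-- A gate: a wiring together with a function (a function `Σ^i → Σ^o`,
represented as a function on lists; see the field `fn_arity` of `Circuit`). -/
structure Gate (A : Type) where
  wiring : Wiring
  fn : List A → List A

/-- A circuit on the alphabet `A`: gates placed on the vertex set `dom` of an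
oriented subgraph of ℤ² with arc set `arcs`, with input and output buses of
boundary arcs, such that wirings of neighbouring gates match. -/
structure Circuit (A : Type) where
  dom : Set Pos
  arcs : Set (Pos × Dir)
  inputBus : Set (Pos × Dir)
  outputBus : Set (Pos × Dir)
  gate : Pos → Gate A
  arcs_src : ∀ a ∈ arcs, a.1 ∈ dom
  arcs_tgt : ∀ a ∈ arcs, a.1 + a.2.vec ∈ dom
  arcs_once : ∀ a ∈ arcs, (a.1 + a.2.vec, a.2.opp) ∉ arcs
  inputBus_mem : ∀ a ∈ inputBus, a.1 ∉ dom ∧ a.1 + a.2.vec ∈ dom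
  outputBus_mem : ∀ a ∈ outputBus, a.1 ∈ dom ∧ a.1 + a.2.vec ∉ dom
  arc_wiring : ∀ a ∈ arcs,
      a.2 ∈ (gate a.1).wiring.outputs ∧
      a.2.opp ∈ (gate (a.1 + a.2.vec)).wiring.inputs ∧
      (gate a.1).wiring.outWire a.2 = ((gate (a.1 + a.2.vec)).wiring.inputs, a.2.opp)
  nonarc_inert : ∀ z ∈ dom, ∀ d : Dir, z + d.vec ∈ dom →
      (z, d) ∉ arcs → (z + d.vec, d.opp) ∉ arcs →
      d ∉ (gate z).wiring.inputs ∧ d ∉ (gate z).wiring.outputs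
  boundary : ∀ z ∈ dom, ∀ d : Dir, z + d.vec ∉ dom →
      ((d ∉ (gate z).wiring.inputs ∧ d ∉ (gate z).wiring.outputs ∧
          (z, d) ∉ outputBus ∧ (z + d.vec, d.opp) ∉ inputBus) ∨
       (d ∈ (gate z).wiring.outputs ∧ (z, d) ∈ outputBus) ∨
       (d ∈ (gate z).wiring.inputs ∧ (z + d.vec, d.opp) ∈ inputBus))
  fn_arity : ∀ z ∈ dom, ∀ xs : List A, xs.length = (gate z).wiring.inputs.length →
      ((gate z).fn xs).length = (gate z).wiring.outputs.card

/-- The list of values carried by the incoming arcs of the cell `z`, in the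
order of the input sides of its gate. -/
def inputVals {A : Type} (C : Circuit A) (v : Pos × Dir → A) (z : Pos) : List A :=
  (C.gate z).wiring.inputs.map fun e => v (z + e.vec, e.opp)

/-- An arc valuation conforms to the circuit `C` if, at each gate, the values
on the output arcs are the components of the gate's function applied to the
values on its input arcs. -/
def Conforms {A : Type} (C : Circuit A) (v : Pos × Dir → A) : Prop :=
  ∀ z ∈ C.dom, ∀ d ∈ (C.gate z).wiring.outputs,
    ((C.gate z).fn (inputVals C v z))[(C.gate z).wiring.outIdx d]? = some (v (z, d))

/-- A circuit is closed when its input bus is empty. -/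
def Circuit.Closed {A : Type} (C : Circuit A) : Prop := C.inputBus = ∅

/-- Well-foundedness of the dependency graph: no directed cycle and no
infinite backwards path. -/
def Circuit.WellFoundedDep {A : Type} (C : Circuit A) : Prop :=
  WellFounded fun b a : Pos => ∃ d : Dir, (b, d) ∈ C.arcs ∧ b + d.vec = a

/-- An evaluable circuit: well-founded and finitely rooted. -/
def Circuit.Evaluable {A : Type} (C : Circuit A) : Prop :=
  C.WellFoundedDep ∧ C.inputBus.Finite ∧
    {z | z ∈ C.dom ∧ (C.gate z).wiring.inputs = []}.Finite

/-- A circuit is self-describing if some decoding function recovers the gate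
at each position from the list of pairs (value, direction) of its incoming
arcs in the conforming valuation. -/
def Circuit.SelfDescribing {A : Type} (C : Circuit A) : Prop :=
  ∃ dec : List (A × Dir) → Gate A,
    ∀ v : Pos × Dir → A, Conforms C v → ∀ z ∈ C.dom,
      dec ((C.gate z).wiring.inputs.map fun e => (v (z + e.vec, e.opp), e.opp)) = C.gate z

/-! ### Oriented graphs on ℤ² and locally deterministic arc colorings -/

/-- An oriented subgraph of ℤ², with arcs between adjacent cells and at most
one arc per edge. An arc is a pair `(z, d)`: the arc out of `z` in
direction `d`. -/
structure ArcGraph where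
  verts : Set Pos
  arcs : Set (Pos × Dir)
  arcs_src : ∀ a ∈ arcs, a.1 ∈ verts
  arcs_tgt : ∀ a ∈ arcs, a.1 + a.2.vec ∈ verts
  arcs_once : ∀ a ∈ arcs, (a.1 + a.2.vec, a.2.opp) ∉ arcs

/-- The directions of the incoming arcs of `v` (canonical order). -/
def inDirsOf (Ar : Set (Pos × Dir)) (v : Pos) : List Dir :=
  Dir.all.filter fun e => (v - e.vec, e) ∈ Ar

/-- The input vector of a vertex: the list of pairs (direction, color) of its
incoming arcs. -/
def inputVectorOf {C : Type} (Ar : Set (Pos × Dir)) (P : Pos × Dir → C) (v : Pos) :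
    List (Dir × C) :=
  (inDirsOf Ar v).map fun e => (e, P (v - e.vec, e))

/-- A coloring `P` of the arcs `Ar` is locally deterministic if there are two
prediction functions `πin`, `πsym` such that for every arc `e : a → b` in
direction `d`, `P e = πsym (input vector of a, d)` and `πin (d, P e)` is the
set of directions of the incoming arcs of `b`. -/
def LocallyDeterministic {C : Type} (Ar : Set (Pos × Dir)) (P : Pos × Dir → C) : Prop :=
  ∃ (πin : Dir × C → Set Dir) (πsym : List (Dir × C) × Dir → C),
    ∀ a ∈ Ar,
      P a = πsym (inputVectorOf Ar P a.1, a.2) ∧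
      πin (a.2, P a) = {e : Dir | (a.1 + a.2.vec - e.vec, e) ∈ Ar}

/-- The vertex type of `v`: the partial function assigning to each direction
`d` in which `v` has an arc the pair (direction of that arc, its color). -/
def vertexType {C : Type} (Ar : Set (Pos × Dir)) (P : Pos × Dir → C) (v : Pos) :
    Dir → Option (Dir × C) := fun d =>
  if (v, d) ∈ Ar then some (d, P (v, d))
  else if (v + d.vec, d.opp) ∈ Ar then some (d.opp, P (v + d.vec, d.opp))
  else none

/-- The atlas of a coloring: the set of vertex types of its vertices. -/
def atlas {C : Type} (Gr : ArcGraph) (P : Pos × Dir → C) : Set (Dir → Option (Dir × C)) :=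
  (vertexType Gr.arcs P) '' Gr.verts

/-- Well-foundedness (acyclicity + no infinite backwards path) of an oriented
graph on ℤ². -/
def ArcGraph.WellFoundedArcs (Gr : ArcGraph) : Prop :=
  WellFounded fun b a : Pos => ∃ d : Dir, (b, d) ∈ Gr.arcs ∧ b + d.vec = a

/-- The vertices of in-degree 0 of an oriented graph on ℤ². -/
def ArcGraph.roots (Gr : ArcGraph) : Set Pos :=
  {v | v ∈ Gr.verts ∧ ∀ e : Dir, (v - e.vec, e) ∉ Gr.arcs}

end
section Aux1

lemma wdt_Hsq : wdt Hsq = 2 := by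
  have h : sSup (Prod.fst '' Hsq) = 1 := by
    apply IsGreatest.csSup_eq
    constructor
    · exact ⟨(1,0), ⟨by norm_num, by norm_num⟩, rfl⟩
    · rintro a ⟨p, hp, rfl⟩; exact Nat.lt_succ_iff.mp hp.1
  simp [wdt, h]

lemma hgt_Hsq : hgt Hsq = 2 := by
  have h : sSup (Prod.snd '' Hsq) = 1 := by
    apply IsGreatest.csSup_eq
    constructor
    · exact ⟨(0,1), ⟨by norm_num, by norm_num⟩, rfl⟩
    · rintro a ⟨p, hp, rfl⟩; exact Nat.lt_succ_iff.mp hp.2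
  simp [hgt, h]

lemma iter3 : iterG Hsq 3 = {p : NPos | p.1 < 8 ∧ p.2 < 8} := by
  ext ⟨x, y⟩
  show (x, y) ∈ (subst Hsq)^[3] {(0,0)} ↔ _
  rw [show (3 : ℕ) = 2 + 1 from rfl, Function.iterate_succ_apply',
    show (2 : ℕ) = 1 + 1 from rfl, Function.iterate_succ_apply',
    Function.iterate_one]
  simp only [subst, wdt_Hsq, hgt_Hsq]
  simp only [Hsq, Set.mem_setOf_eq, Set.mem_singleton_iff, Prod.mk.injEq]
  constructor
  · rintro ⟨⟨⟨h1, h2⟩, -⟩, -⟩; constructor <;> omega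
  · rintro ⟨h1, h2⟩
    refine ⟨⟨⟨?_, ?_⟩, ?_, ?_⟩, ?_, ?_⟩ <;> omega

end Aux1
section Aux2

/-- The 8×8 square. -/
def S8' : Set NPos := {p : NPos | p.1 < 8 ∧ p.2 < 8}

lemma wdt_S8 : wdt S8' = 8 := by
  have h : sSup (Prod.fst '' S8') = 7 := by
    apply IsGreatest.csSup_eq
    constructor
    · exact ⟨(7,0), ⟨by norm_num [S8'], by norm_num [S8']⟩, rfl⟩
    · rintro a ⟨p, hp, rfl⟩; exact Nat.lt_succ_iff.mp hp.1
  simp [wdt, h]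

lemma hgt_S8 : hgt S8' = 8 := by
  have h : sSup (Prod.snd '' S8') = 7 := by
    apply IsGreatest.csSup_eq
    constructor
    · exact ⟨(0,7), ⟨by norm_num [S8'], by norm_num [S8']⟩, rfl⟩
    · rintro a ⟨p, hp, rfl⟩; exact Nat.lt_succ_iff.mp hp.2
  simp [hgt, h]

lemma grid_S8 (z : Pos) : z ∈ gridOf S8' := by
  simp only [gridOf, Set.mem_setOf_eq]
  rw [wdt_S8, hgt_S8]
  simp only [S8', Set.mem_setOf_eq]
  push_cast
  omega

lemma mem_embed_S8 {z : Pos} :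
    z ∈ embedN '' S8' ↔ 0 ≤ z.1 ∧ z.1 < 8 ∧ 0 ≤ z.2 ∧ z.2 < 8 := by
  constructor
  · rintro ⟨⟨a, b⟩, hp, rfl⟩
    simp only [S8', Set.mem_setOf_eq] at hp
    simp only [embedN]
    omega
  · rintro ⟨h1, h2, h3, h4⟩
    refine ⟨(z.1.toNat, z.2.toNat), ?_, ?_⟩
    · simp only [S8', Set.mem_setOf_eq]; omega
    · simp only [embedN, Prod.ext_iff]; constructor <;> simp <;> omega

lemma mem_embed_K {z : Pos} :
    z ∈ embedN '' Kgen ↔ 0 ≤ z.1 ∧ z.1 < 6 ∧ 0 ≤ z.2 ∧ z.2 < 6 ∧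
      ¬((z.1 = 2 ∨ z.1 = 3) ∧ (z.2 = 2 ∨ z.2 = 3)) := by
  constructor
  · rintro ⟨⟨a, b⟩, hp, rfl⟩
    simp only [Kgen, Set.mem_setOf_eq] at hp
    simp only [embedN]
    omega
  · rintro ⟨h1, h2, h3, h4, h5⟩
    refine ⟨(z.1.toNat, z.2.toNat), ?_, ?_⟩
    · simp only [Kgen, Set.mem_setOf_eq]; omega
    · simp only [embedN, Prod.ext_iff]; constructor <;> simp <;> omega

/-- The stretch map. -/
def fstr (t : ℤ) : ℤ := if t ≤ 2 then t else t + 2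

lemma fspec (t : ℤ) : (t ≤ 2 ∧ fstr t = t) ∨ (3 ≤ t ∧ fstr t = t + 2) := by
  unfold fstr; split <;> [left; right] <;> omega

/-- The embedding of vertices. -/
def phi (z : Pos) : Pos := (fstr z.1, fstr z.2)

lemma phi_inj : Function.Injective phi := by
  intro a b h
  simp only [phi, Prod.ext_iff] at h
  have h1 := fspec a.1; have h2 := fspec b.1
  have h3 := fspec a.2; have h4 := fspec b.2
  exact Prod.ext (by omega) (by omega)

lemma mem_V8 {z : Pos} (h1 : -1 ≤ z.1) (h2 : z.1 ≤ 8) (h3 : -1 ≤ z.2) (h4 : z.2 ≤ 8)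
    (h5 : ¬((z.1 = -1 ∨ z.1 = 8) ∧ (z.2 = -1 ∨ z.2 = 8))) : z ∈ gplusV S8' := by
  by_cases hx : 0 ≤ z.1 ∧ z.1 < 8 ∧ 0 ≤ z.2 ∧ z.2 < 8
  · exact Or.inl (mem_embed_S8.2 hx)
  · refine Or.inr ⟨grid_S8 z, ?_⟩
    by_cases e1 : z.1 = -1
    · refine ⟨Dir.E, mem_embed_S8.2 ?_⟩
      simp only [Dir.vec, Prod.fst_add, Prod.snd_add]; omega
    by_cases e2 : z.1 = 8
    · refine ⟨Dir.W, mem_embed_S8.2 ?_⟩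
      simp only [Dir.vec, Prod.fst_add, Prod.snd_add]; omega
    by_cases e3 : z.2 = -1
    · refine ⟨Dir.N, mem_embed_S8.2 ?_⟩
      simp only [Dir.vec, Prod.fst_add, Prod.snd_add]; omega
    · refine ⟨Dir.S, mem_embed_S8.2 ?_⟩
      simp only [Dir.vec, Prod.fst_add, Prod.snd_add]; omega

lemma VK_sub {z : Pos} (h : z ∈ gplusV Kgen) :
    -1 ≤ z.1 ∧ z.1 ≤ 6 ∧ -1 ≤ z.2 ∧ z.2 ≤ 6 ∧
      ¬((z.1 = -1 ∨ z.1 = 6) ∧ (z.2 = -1 ∨ z.2 = 6)) := by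
  rcases h with h | ⟨-, d, hd⟩
  · have := mem_embed_K.1 h; omega
  · cases d <;>
    · have := mem_embed_K.1 hd
      simp only [Dir.vec, Prod.fst_add, Prod.snd_add] at this
      omega

lemma phi_memV8 {z : Pos} (h : z ∈ gplusV Kgen) : phi z ∈ gplusV S8' := by
  have hk := VK_sub h
  have h1 := fspec z.1; have h2 := fspec z.2
  exact mem_V8 (by show -1 ≤ fstr z.1; omega) (by show fstr z.1 ≤ 8; omega)
    (by show -1 ≤ fstr z.2; omega) (by show fstr z.2 ≤ 8; omega)
    (by show ¬((fstr z.1 = -1 ∨ fstr z.1 = 8) ∧ (fstr z.2 = -1 ∨ fstr z.2 = 8)); omega)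

lemma adjS8 {a b : Pos} (ha : a ∈ gplusV S8') (hb : b ∈ gplusV S8') (d : Dir)
    (h : b = a + d.vec) : (gplus S8').Adj a b := ⟨ha, hb, d, h⟩

end Aux2
section Aux3

/-- Midpoint predicate: `z` is an interior point of the stretched walk for the
edge `{u,v}`. -/
def MidPt (u v z : Pos) : Prop :=
  ((z.1 = 3 ∨ z.1 = 4) ∧ ∃ y, z.2 = fstr y ∧
      ((u = (2, y) ∧ v = (3, y)) ∨ (u = (3, y) ∧ v = (2, y)))) ∨
  ((z.2 = 3 ∨ z.2 = 4) ∧ ∃ x, z.1 = fstr x ∧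
      ((u = (x, 2) ∧ v = (x, 3)) ∨ (u = (x, 3) ∧ v = (x, 2))))

lemma phi_not_mid {w a b z : Pos} (hz : z = phi w) : ¬ MidPt a b z := by
  rintro (⟨h34, y, hy, -⟩ | ⟨h34, x, hx, -⟩) <;> subst hz
  · have := fspec w.1; simp only [phi] at h34; omega
  · have := fspec w.2; simp only [phi] at h34; omega

lemma mid_mid {u v u' v' z : Pos} (h1 : MidPt u v z) (h2 : MidPt u' v' z) :
    (u = u' ∧ v = v') ∨ (u = v' ∧ v = u') := by
  rcases h1 with ⟨h34, y, hy, hp⟩ | ⟨h34, x, hx, hp⟩ <;>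
    rcases h2 with ⟨h34', y', hy', hp'⟩ | ⟨h34', x', hx', hp'⟩
  · have hyy : y = y' := by
      have := fspec y; have := fspec y'; omega
    subst hyy
    rcases hp with ⟨rfl, rfl⟩ | ⟨rfl, rfl⟩ <;> rcases hp' with ⟨rfl, rfl⟩ | ⟨rfl, rfl⟩ <;> simp
  · exfalso; have := fspec x'; omega
  · exfalso; have := fspec y'; omega
  · have hxx : x = x' := by
      have := fspec x; have := fspec x'; omega
    subst hxx
    rcases hp with ⟨rfl, rfl⟩ | ⟨rfl, rfl⟩ <;> rcases hp' with ⟨rfl, rfl⟩ | ⟨rfl, rfl⟩ <;> simp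

lemma gapH (c : ℤ) (hc1 : -1 ≤ c) (hc2 : c ≤ 8) :
    ∃ w : (gplus S8').Walk (2, c) (5, c), w.IsPath ∧
      w.support = [(2, c), (3, c), (4, c), (5, c)] := by
  have m2 : ((2:ℤ), c) ∈ gplusV S8' := mem_V8 (by omega) (by omega) hc1 hc2 (by omega)
  have m3 : ((3:ℤ), c) ∈ gplusV S8' := mem_V8 (by omega) (by omega) hc1 hc2 (by omega)
  have m4 : ((4:ℤ), c) ∈ gplusV S8' := mem_V8 (by omega) (by omega) hc1 hc2 (by omega)
  have m5 : ((5:ℤ), c) ∈ gplusV S8' := mem_V8 (by omega) (by omega) hc1 hc2 (by omega)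
  have e1 : ((3:ℤ), c) = ((2:ℤ), c) + Dir.E.vec := by
    simp [Dir.vec, Prod.ext_iff]
  have e2 : ((4:ℤ), c) = ((3:ℤ), c) + Dir.E.vec := by
    simp [Dir.vec, Prod.ext_iff]
  have e3 : ((5:ℤ), c) = ((4:ℤ), c) + Dir.E.vec := by
    simp [Dir.vec, Prod.ext_iff]
  refine ⟨.cons (adjS8 m2 m3 .E e1) (.cons (adjS8 m3 m4 .E e2)
    (.cons (adjS8 m4 m5 .E e3) .nil)), ?_, ?_⟩
  · rw [SimpleGraph.Walk.isPath_def]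
    simp [Prod.ext_iff]
  · simp

lemma gapV (c : ℤ) (hc1 : -1 ≤ c) (hc2 : c ≤ 8) :
    ∃ w : (gplus S8').Walk (c, 2) (c, 5), w.IsPath ∧
      w.support = [(c, 2), (c, 3), (c, 4), (c, 5)] := by
  have m2 : (c, (2:ℤ)) ∈ gplusV S8' := mem_V8 hc1 hc2 (by omega) (by omega) (by omega)
  have m3 : (c, (3:ℤ)) ∈ gplusV S8' := mem_V8 hc1 hc2 (by omega) (by omega) (by omega)
  have m4 : (c, (4:ℤ)) ∈ gplusV S8' := mem_V8 hc1 hc2 (by omega) (by omega) (by omega)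
  have m5 : (c, (5:ℤ)) ∈ gplusV S8' := mem_V8 hc1 hc2 (by omega) (by omega) (by omega)
  have e1 : (c, (3:ℤ)) = (c, (2:ℤ)) + Dir.N.vec := by
    simp [Dir.vec, Prod.ext_iff]
  have e2 : (c, (4:ℤ)) = (c, (3:ℤ)) + Dir.N.vec := by
    simp [Dir.vec, Prod.ext_iff]
  have e3 : (c, (5:ℤ)) = (c, (4:ℤ)) + Dir.N.vec := by
    simp [Dir.vec, Prod.ext_iff]
  refine ⟨.cons (adjS8 m2 m3 .N e1) (.cons (adjS8 m3 m4 .N e2)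
    (.cons (adjS8 m4 m5 .N e3) .nil)), ?_, ?_⟩
  · rw [SimpleGraph.Walk.isPath_def]
    simp [Prod.ext_iff]
  · simp

end Aux3
section Aux4

lemma unitWalk {u v : Pos} (hpu : phi u ∈ gplusV S8') (hpv : phi v ∈ gplusV S8')
    (hne : phi u ≠ phi v) (d : Dir) (hstep : phi v = phi u + d.vec) :
    ∃ w : (gplus S8').Walk (phi u) (phi v), w.IsPath ∧
      ∀ z ∈ w.support, z = phi u ∨ z = phi v ∨ MidPt u v z := by
  refine ⟨.cons (adjS8 hpu hpv d hstep) .nil, ?_, ?_⟩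
  · rw [SimpleGraph.Walk.isPath_def]
    simp [hne]
  · intro z hz
    simp only [SimpleGraph.Walk.support_cons, SimpleGraph.Walk.support_nil,
      List.mem_cons, List.not_mem_nil, or_false] at hz
    rcases hz with rfl | rfl
    · exact Or.inl rfl
    · exact Or.inr (Or.inl rfl)

lemma build {u v : Pos} (h : (gplus Kgen).Adj u v) :
    ∃ w : (gplus S8').Walk (phi u) (phi v), w.IsPath ∧
      ∀ z ∈ w.support, z = phi u ∨ z = phi v ∨ MidPt u v z := by
  have hne : phi u ≠ phi v := fun e => h.ne (phi_inj e)
  obtain ⟨hu, hv, d, hd⟩ := h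
  have HU := VK_sub hu
  have HV := VK_sub hv
  have hpu := phi_memV8 hu
  have hpv := phi_memV8 hv
  have hfu1 := fspec u.1; have hfu2 := fspec u.2
  have hfv1 := fspec v.1; have hfv2 := fspec v.2
  cases d with
  | E =>
    have hco : v.1 = u.1 + 1 ∧ v.2 = u.2 := by
      rw [hd]; simp [Dir.vec]
    by_cases hg : u.1 = 2
    · have hueq : u = (2, u.2) := Prod.ext hg rfl
      have hveq : v = (3, u.2) := Prod.ext (by omega) hco.2
      have hfu : phi u = (2, fstr u.2) := Prod.ext (by show fstr u.1 = 2; omega) rfl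
      have hfv : phi v = (5, fstr u.2) := by
        refine Prod.ext (by show fstr v.1 = 5; omega) ?_
        show fstr v.2 = fstr u.2
        rw [hco.2]
      obtain ⟨w, hw1, hw2⟩ := gapH (fstr u.2) (by omega) (by omega)
      rw [hfu, hfv]
      refine ⟨w, hw1, ?_⟩
      intro z hz
      rw [hw2] at hz
      simp only [List.mem_cons, List.not_mem_nil, or_false] at hz
      rcases hz with rfl | rfl | rfl | rfl
      · exact Or.inl rfl
      · exact Or.inr (Or.inr (Or.inl ⟨Or.inl rfl, u.2, rfl, Or.inl ⟨hueq, hveq⟩⟩))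
      · exact Or.inr (Or.inr (Or.inl ⟨Or.inr rfl, u.2, rfl, Or.inl ⟨hueq, hveq⟩⟩))
      · exact Or.inr (Or.inl rfl)
    · refine unitWalk hpu hpv hne .E ?_
      simp only [phi, Dir.vec, Prod.ext_iff, Prod.fst_add, Prod.snd_add]
      constructor <;> omega
  | W =>
    have hco : v.1 = u.1 - 1 ∧ v.2 = u.2 := by
      rw [hd]; simp [Dir.vec]; omega
    by_cases hg : u.1 = 3
    · have hueq : u = (3, u.2) := Prod.ext hg rfl
      have hveq : v = (2, u.2) := Prod.ext (by omega) hco.2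
      have hfu : phi u = (5, fstr u.2) := Prod.ext (by show fstr u.1 = 5; omega) rfl
      have hfv : phi v = (2, fstr u.2) := by
        refine Prod.ext (by show fstr v.1 = 2; omega) ?_
        show fstr v.2 = fstr u.2
        rw [hco.2]
      obtain ⟨w, hw1, hw2⟩ := gapH (fstr u.2) (by omega) (by omega)
      rw [hfu, hfv]
      refine ⟨w.reverse, hw1.reverse, ?_⟩
      intro z hz
      rw [SimpleGraph.Walk.support_reverse, List.mem_reverse, hw2] at hz
      simp only [List.mem_cons, List.not_mem_nil, or_false] at hz
      rcases hz with rfl | rfl | rfl | rfl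
      · exact Or.inr (Or.inl rfl)
      · exact Or.inr (Or.inr (Or.inl ⟨Or.inl rfl, u.2, rfl, Or.inr ⟨hueq, hveq⟩⟩))
      · exact Or.inr (Or.inr (Or.inl ⟨Or.inr rfl, u.2, rfl, Or.inr ⟨hueq, hveq⟩⟩))
      · exact Or.inl rfl
    · refine unitWalk hpu hpv hne .W ?_
      simp only [phi, Dir.vec, Prod.ext_iff, Prod.fst_add, Prod.snd_add]
      constructor <;> omega
  | N =>
    have hco : v.1 = u.1 ∧ v.2 = u.2 + 1 := by
      rw [hd]; simp [Dir.vec]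
    by_cases hg : u.2 = 2
    · have hueq : u = (u.1, 2) := Prod.ext rfl hg
      have hveq : v = (u.1, 3) := Prod.ext hco.1 (by omega)
      have hfu : phi u = (fstr u.1, 2) := Prod.ext rfl (by show fstr u.2 = 2; omega)
      have hfv : phi v = (fstr u.1, 5) := by
        refine Prod.ext ?_ (by show fstr v.2 = 5; omega)
        show fstr v.1 = fstr u.1
        rw [hco.1]
      obtain ⟨w, hw1, hw2⟩ := gapV (fstr u.1) (by omega) (by omega)
      rw [hfu, hfv]
      refine ⟨w, hw1, ?_⟩
      intro z hz
      rw [hw2] at hz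
      simp only [List.mem_cons, List.not_mem_nil, or_false] at hz
      rcases hz with rfl | rfl | rfl | rfl
      · exact Or.inl rfl
      · exact Or.inr (Or.inr (Or.inr ⟨Or.inl rfl, u.1, rfl, Or.inl ⟨hueq, hveq⟩⟩))
      · exact Or.inr (Or.inr (Or.inr ⟨Or.inr rfl, u.1, rfl, Or.inl ⟨hueq, hveq⟩⟩))
      · exact Or.inr (Or.inl rfl)
    · refine unitWalk hpu hpv hne .N ?_
      simp only [phi, Dir.vec, Prod.ext_iff, Prod.fst_add, Prod.snd_add]
      constructor <;> omega
  | S =>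
    have hco : v.1 = u.1 ∧ v.2 = u.2 - 1 := by
      rw [hd]; simp [Dir.vec]; omega
    by_cases hg : u.2 = 3
    · have hueq : u = (u.1, 3) := Prod.ext rfl hg
      have hveq : v = (u.1, 2) := Prod.ext hco.1 (by omega)
      have hfu : phi u = (fstr u.1, 5) := Prod.ext rfl (by show fstr u.2 = 5; omega)
      have hfv : phi v = (fstr u.1, 2) := by
        refine Prod.ext ?_ (by show fstr v.2 = 2; omega)
        show fstr v.1 = fstr u.1
        rw [hco.1]
      obtain ⟨w, hw1, hw2⟩ := gapV (fstr u.1) (by omega) (by omega)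
      rw [hfu, hfv]
      refine ⟨w.reverse, hw1.reverse, ?_⟩
      intro z hz
      rw [SimpleGraph.Walk.support_reverse, List.mem_reverse, hw2] at hz
      simp only [List.mem_cons, List.not_mem_nil, or_false] at hz
      rcases hz with rfl | rfl | rfl | rfl
      · exact Or.inr (Or.inl rfl)
      · exact Or.inr (Or.inr (Or.inr ⟨Or.inl rfl, u.1, rfl, Or.inr ⟨hueq, hveq⟩⟩))
      · exact Or.inr (Or.inr (Or.inr ⟨Or.inr rfl, u.1, rfl, Or.inr ⟨hueq, hveq⟩⟩))
      · exact Or.inl rfl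
    · refine unitWalk hpu hpv hne .S ?_
      simp only [phi, Dir.vec, Prod.ext_iff, Prod.fst_add, Prod.snd_add]
      constructor <;> omega

end Aux4
section Aux5

noncomputable def embKS8 : SubdivEmbed Kgen S8' where
  φ := phi
  inj := fun a _ b _ hab => phi_inj hab
  marks := by
    intro d v hv
    have hb := mem_embed_K.1 hv.2
    refine ⟨grid_S8 _, mem_embed_S8.2 ?_⟩
    have h1 := fspec v.1
    have h2 := fspec v.2
    cases d <;>
    · simp only [Dir.vec, Prod.fst_sub, Prod.snd_sub, phi] at hb ⊢
      norm_num at hb ⊢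
      omega
  walk := fun _ _ h => (build h).choose
  walk_path := fun _ _ h => (build h).choose_spec.1
  walk_avoid := by
    intro u v h z hz w hw hzw
    rcases (build h).choose_spec.2 z hz with h1 | h1 | h1
    · exact Or.inl (phi_inj (hzw.symm.trans h1))
    · exact Or.inr (phi_inj (hzw.symm.trans h1))
    · exact absurd h1 (phi_not_mid hzw)
  walk_disj := by
    intro u v h u' v' h' hne z hz hz'
    rcases (build h).choose_spec.2 z hz with h1 | h1 | h1 <;>
      rcases (build h').choose_spec.2 z hz' with h2 | h2 | h2
    · exact ⟨Or.inl h1, Or.inl h2⟩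
    · exact ⟨Or.inl h1, Or.inr h2⟩
    · exact absurd h2 (phi_not_mid h1)
    · exact ⟨Or.inr h1, Or.inl h2⟩
    · exact ⟨Or.inr h1, Or.inr h2⟩
    · exact absurd h2 (phi_not_mid h1)
    · exact absurd h1 (phi_not_mid h2)
    · exact absurd h1 (phi_not_mid h2)
    · exact absurd (mid_mid h1 h2) hne

end Aux5

/-- `H³ = σ_H³({(0,0)})` is the 8×8 square `{0,…,7}²`, and
`K ⪯ H³`, where `H = {0,1}²`. -/
theorem K_subconnector_H3 :
    iterG Hsq 3 = {p : NPos | p.1 < 8 ∧ p.2 < 8} ∧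
    Subconnector Kgen (iterG Hsq 3) := by
  refine ⟨iter3, ?_⟩
  rw [iter3]
  exact ⟨embKS8⟩

end SelfAssembly
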